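/- Let J = α·Σ_{i=−(L−1)}^{L−1} w_i vec(A_i) vec(A_i)^H + (1−α)·Σ_{i=−(L−1)}^{L−1} w̃_i vec(B_i) vec(B_i)^H with real α, w_i, w̃_i. Then for every k with −(L−1) ≤ k ≤ L−1, J·vec(A_k) = α·w_k·(2L − 2|k|)·vec(A_k); that is, vec(A_k) is an eigenvector of J with eigenvalue λ_A(k) = α·w_k·(2L − 2|k|). -/

import Mathlib

open scoped BigOperators
open Matrix

/-- The `L × L` shift (Toeplitz) matrix `U_k` with `(U_k)_{i,j} = 1` if `j - i = k`. -/
def shiftU (L : ℕ) (k : ℤ) : Matrix (Fin L) (Fin L) ℂ :=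
  Matrix.of fun i j => if (j : ℤ) - (i : ℤ) = k then 1 else 0

/-- The `2L × 2L` block-diagonal matrix `A_k = diag(U_k, U_k)`. -/
def AMat (L : ℕ) (k : ℤ) : Matrix (Fin L ⊕ Fin L) (Fin L ⊕ Fin L) ℂ :=
  Matrix.fromBlocks (shiftU L k) 0 0 (shiftU L k)

/-- The `2L × 2L` block matrix `B_k = [[0, U_k], [0, 0]]`. -/
def BMat (L : ℕ) (k : ℤ) : Matrix (Fin L ⊕ Fin L) (Fin L ⊕ Fin L) ℂ :=
  Matrix.fromBlocks 0 (shiftU L k) 0 0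

/-- Vectorization of a square matrix. -/
def vecM {n : Type*} (M : Matrix n n ℂ) : n × n → ℂ := fun p => M p.1 p.2

/-- `J = α Σ_i w_i vec(A_i) vec(A_i)^H + (1-α) Σ_i w̃_i vec(B_i) vec(B_i)^H`. -/
noncomputable def JMat (L : ℕ) (α : ℝ) (w wt : ℤ → ℝ) :
    Matrix ((Fin L ⊕ Fin L) × (Fin L ⊕ Fin L)) ((Fin L ⊕ Fin L) × (Fin L ⊕ Fin L)) ℂ :=
  (α : ℂ) • ∑ k ∈ Finset.Icc (-(L : ℤ) + 1) ((L : ℤ) - 1),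
      (w k : ℂ) • Matrix.vecMulVec (vecM (AMat L k)) (star (vecM (AMat L k)))
  + ((1 - α : ℝ) : ℂ) • ∑ k ∈ Finset.Icc (-(L : ℤ) + 1) ((L : ℤ) - 1),
      (wt k : ℂ) • Matrix.vecMulVec (vecM (BMat L k)) (star (vecM (BMat L k)))

/-! ### Auxiliary lemmas -/

lemma my_vecMulVec_mulVec {n : Type*} [Fintype n] (u v x : n → ℂ) :
    Matrix.vecMulVec u v *ᵥ x = (v ⬝ᵥ x) • u := by
  ext i
  simp [Matrix.mulVec, Matrix.vecMulVec_apply, dotProduct, Finset.sum_mul,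
    mul_assoc, mul_comm, mul_left_comm, Finset.mul_sum]

lemma my_sum_mulVec {ι n : Type*} [Fintype n] (s : Finset ι) (f : ι → Matrix n n ℂ)
    (x : n → ℂ) : (∑ i ∈ s, f i) *ᵥ x = ∑ i ∈ s, f i *ᵥ x := by
  ext j
  simp only [Matrix.mulVec, dotProduct, Matrix.sum_apply, Finset.sum_apply,
    Finset.sum_mul]
  exact Finset.sum_comm

lemma shift_card_nonneg (L : ℕ) (k : ℤ) (hk0 : 0 ≤ k) :
    (Finset.univ.filter fun p : Fin L × Fin L => ((p.2 : ℤ) - (p.1 : ℤ) = k)).card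
      = L - k.natAbs := by
  set m := k.toNat with hm
  have hkm : k = (m : ℤ) := (Int.toNat_of_nonneg hk0).symm
  have hna : k.natAbs = m := by omega
  rw [hna]
  rcases Nat.lt_or_ge L (m + 1) with hmL | hmL
  · rcases le_or_gt L m with hLm | h'
    · have : (L : ℤ) ≤ m := by exact_mod_cast hLm
      rw [Finset.filter_false_of_mem, Finset.card_empty]
      · omega
      · intro p _
        have h1 := p.1.isLt
        have h2 := p.2.isLt
        have h1' : (p.1 : ℤ) < L := by exact_mod_cast h1
        have h2' : (p.2 : ℤ) < L := by exact_mod_cast h2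
        have h0 : (0:ℤ) ≤ (p.1 : ℤ) := by positivity
        omega
    · omega
  · have hL : 0 < L := by omega
    rw [← Finset.card_range (L - m)]
    refine Finset.card_nbij' (fun p => (p.1 : ℕ))
      (fun a => (⟨a % L, Nat.mod_lt a hL⟩, ⟨(a + m) % L, Nat.mod_lt _ hL⟩))
      ?_ ?_ ?_ ?_
    · intro p hp
      simp only [Finset.mem_coe, Finset.mem_filter, Finset.mem_univ, true_and] at hp
      have h2 := p.2.isLt
      have h2' : (p.2 : ℤ) < L := by exact_mod_cast h2
      have h0 : (0:ℤ) ≤ (p.2 : ℤ) := by positivity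
      simp only [Finset.mem_coe, Finset.mem_range]
      omega
    · intro a ha
      simp only [Finset.mem_coe, Finset.mem_range] at ha
      have ha1 : a < L := by omega
      have ha2 : a + m < L := by omega
      simp only [Finset.mem_coe, Finset.mem_filter, Finset.mem_univ, true_and,
        Nat.mod_eq_of_lt ha1, Nat.mod_eq_of_lt ha2]
      push_cast
      omega
    · intro p hp
      simp only [Finset.mem_coe, Finset.mem_filter, Finset.mem_univ, true_and] at hp
      have h1 := p.1.isLt
      have h2 := p.2.isLt
      have hq : (p.2 : ℕ) = (p.1 : ℕ) + m := by omega
      ext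
      · simp [Nat.mod_eq_of_lt h1]
      · simp [← hq, Nat.mod_eq_of_lt h2]
    · intro a ha
      simp only [Finset.mem_coe, Finset.mem_range] at ha
      have ha1 : a < L := by omega
      simp [Nat.mod_eq_of_lt ha1]

lemma shift_card (L : ℕ) (k : ℤ) :
    (Finset.univ.filter fun p : Fin L × Fin L => ((p.2 : ℤ) - (p.1 : ℤ) = k)).card
      = L - k.natAbs := by
  rcases le_or_gt 0 k with hk0 | hk0
  · exact shift_card_nonneg L k hk0
  · have hswap : (Finset.univ.filter fun p : Fin L × Fin L =>
        ((p.2 : ℤ) - (p.1 : ℤ) = k)).card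
        = (Finset.univ.filter fun p : Fin L × Fin L =>
        ((p.2 : ℤ) - (p.1 : ℤ) = -k)).card := by
      refine Finset.card_nbij' Prod.swap Prod.swap ?_ ?_ ?_ ?_ <;>
        simp +contextual [Finset.mem_filter, Set.MapsTo, Set.LeftInvOn, Set.RightInvOn] <;> omega
    rw [hswap, shift_card_nonneg L (-k) (by omega), Int.natAbs_neg]

lemma shift_sum (L : ℕ) (k : ℤ) :
    ∑ p : Fin L × Fin L, shiftU L k p.1 p.2 = ((L - k.natAbs : ℕ) : ℂ) := by
  rw [← shift_card L k]
  simp [shiftU, Finset.sum_boole]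

lemma shift_star_mul (L : ℕ) (k : ℤ) (a b : Fin L) :
    star (shiftU L k a b) * shiftU L k a b = shiftU L k a b := by
  simp only [shiftU, Matrix.of_apply]
  split <;> simp

lemma shift_star_mul_ne (L : ℕ) (i k : ℤ) (h : i ≠ k) (a b : Fin L) :
    star (shiftU L i a b) * shiftU L k a b = 0 := by
  simp only [shiftU, Matrix.of_apply]
  split_ifs with h1 h2 <;> simp
  omega

lemma dotA_self (L : ℕ) (k : ℤ) :
    star (vecM (AMat L k)) ⬝ᵥ vecM (AMat L k) = 2 * ((L - k.natAbs : ℕ) : ℂ) := by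
  simp only [dotProduct, Pi.star_apply, vecM]
  rw [Fintype.sum_prod_type, Fintype.sum_sum_type]
  have h1 : ∀ x : Fin L ⊕ Fin L, ∀ a : Fin L,
      star (AMat L k (Sum.inl a) x) * AMat L k (Sum.inl a) x
        = Sum.elim (fun b => shiftU L k a b) (fun _ => 0) x := by
    rintro (b | b) a
    · simp only [AMat, Matrix.fromBlocks_apply₁₁, Sum.elim_inl]; exact shift_star_mul L k a b
    · simp [AMat]
  have h2 : ∀ x : Fin L ⊕ Fin L, ∀ a : Fin L,
      star (AMat L k (Sum.inr a) x) * AMat L k (Sum.inr a) x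
        = Sum.elim (fun _ => (0:ℂ)) (fun b => shiftU L k a b) x := by
    rintro (b | b) a
    · simp [AMat]
    · simp only [AMat, Matrix.fromBlocks_apply₂₂, Sum.elim_inr]; exact shift_star_mul L k a b
  calc (∑ a : Fin L, ∑ x : Fin L ⊕ Fin L,
          star (AMat L k (Sum.inl a) x) * AMat L k (Sum.inl a) x)
        + ∑ a : Fin L, ∑ x : Fin L ⊕ Fin L,
          star (AMat L k (Sum.inr a) x) * AMat L k (Sum.inr a) x
      = (∑ a : Fin L, ∑ b : Fin L, shiftU L k a b)
        + ∑ a : Fin L, ∑ b : Fin L, shiftU L k a b := by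
        congr 1 <;> apply Finset.sum_congr rfl <;> intro a _
        · simp only [h1]; rw [Fintype.sum_sum_type]; simp
        · simp only [h2]; rw [Fintype.sum_sum_type]; simp
    _ = 2 * ((L - k.natAbs : ℕ) : ℂ) := by
        have hs := shift_sum L k
        rw [Fintype.sum_prod_type] at hs
        rw [hs]; ring

lemma dotA_ne (L : ℕ) (i k : ℤ) (h : i ≠ k) :
    star (vecM (AMat L i)) ⬝ᵥ vecM (AMat L k) = 0 := by
  simp only [dotProduct, Pi.star_apply, vecM]
  apply Finset.sum_eq_zero
  rintro ⟨(a | a), (b | b)⟩ _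
  · simp only [AMat, Matrix.fromBlocks_apply₁₁]; exact shift_star_mul_ne L i k h a b
  · simp [AMat]
  · simp [AMat]
  · simp only [AMat, Matrix.fromBlocks_apply₂₂]; exact shift_star_mul_ne L i k h a b

lemma dotB (L : ℕ) (i k : ℤ) :
    star (vecM (BMat L i)) ⬝ᵥ vecM (AMat L k) = 0 := by
  simp only [dotProduct, Pi.star_apply, vecM]
  apply Finset.sum_eq_zero
  rintro ⟨(a | a), (b | b)⟩ _ <;> simp [AMat, BMat]

/-- For every `-(L-1) ≤ k ≤ L-1`, `J vec(A_k) = α w_k (2L - 2|k|) vec(A_k)`; i.e.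
`vec(A_k)` is an eigenvector of `J` with eigenvalue `λ_A(k) = α w_k (2L - 2|k|)`. -/
theorem stmt5 (L : ℕ) (α : ℝ) (w wt : ℤ → ℝ) (k : ℤ) (hk : |k| ≤ (L : ℤ) - 1) :
    JMat L α w wt *ᵥ vecM (AMat L k)
      = ((α * w k * (2 * (L : ℝ) - 2 * (k.natAbs : ℝ)) : ℝ) : ℂ) • vecM (AMat L k) := by
  have habs := abs_le.mp hk
  have hkmem : k ∈ Finset.Icc (-(L : ℤ) + 1) ((L : ℤ) - 1) := by
    rw [Finset.mem_Icc]; omega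
  have hnat : k.natAbs ≤ L := by omega
  unfold JMat
  rw [Matrix.add_mulVec, Matrix.smul_mulVec, Matrix.smul_mulVec,
    my_sum_mulVec, my_sum_mulVec]
  simp only [Matrix.smul_mulVec, my_vecMulVec_mulVec]
  rw [Finset.sum_eq_single k, Finset.sum_eq_zero (fun i _ => by rw [dotB]; simp)]
  · rw [dotA_self]
    rw [smul_zero, add_zero, smul_smul, smul_smul]
    congr 1
    push_cast [Nat.cast_sub hnat]
    ring
  · intro i _ hne
    rw [dotA_ne L i k hne]
    simp
  · intro hcon
    exact absurd hkmem hcon
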